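/- For every integer n ≥ 2, let 𝒩̃_n(x) = Σ_{j=0}^{n−1} ((3n−2j)/(n+2)) c_{n,j+1} x^j be the Christoffel-type transform of the reduced Narayana polynomial, i.e. the polynomial satisfying (x−1)𝒩̃_n(x) = 𝒩_{n+1}(x) − (𝒩_{n+1}(1)/𝒩_n(1))𝒩_n(x). Then 𝒩̃_n has n−1 real simple zeros, and they alternate with the zeros of 𝒩_n: writing z_1 < ⋯ < z_{n−1} for the zeros of 𝒩̃_n and x_1 < ⋯ < x_{n−1} for the zeros of 𝒩_n, one has z_1 < x_1 < z_2 < x_2 < ⋯ < z_{n−1} < x_{n−1}, i.e. 𝒩̃_n ≺ 𝒩_n. -/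

import Mathlib

open Polynomial

/-- The Narayana numbers `c_{n,k} = (1/n) C(n,k) C(n,k−1)` (for `1 ≤ k ≤ n`). -/
noncomputable def narayanaNum (n k : ℕ) : ℝ :=
  (n.choose k : ℝ) * (n.choose (k - 1) : ℝ) / (n : ℝ)

/-- The reduced Narayana polynomial `𝒩_n(x) = N_n(x)/x = Σ_{j=0}^{n−1} c_{n,j+1} x^j`. -/
noncomputable def redNarayana (n : ℕ) : Polynomial ℝ :=
  ∑ j ∈ Finset.range n, Polynomial.C (narayanaNum n (j + 1)) * Polynomial.X ^ j

/-- The Christoffel-type transform of the reduced Narayana polynomial: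
`𝒩̃_n(x) = Σ_{j=0}^{n−1} ((3n−2j)/(n+2)) c_{n,j+1} x^j`. -/
noncomputable def redNarayanaCT (n : ℕ) : Polynomial ℝ :=
  ∑ j ∈ Finset.range n,
    Polynomial.C ((3 * (n : ℝ) - 2 * (j : ℝ)) / ((n : ℝ) + 2) * narayanaNum n (j + 1)) *
      Polynomial.X ^ j

open Finset Filter

lemma redNarayana_coeff (n j : ℕ) :
    (redNarayana n).coeff j = if j < n then narayanaNum n (j+1) else 0 := by
  simp only [redNarayana, Polynomial.finset_sum_coeff, Polynomial.coeff_C_mul,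
    Polynomial.coeff_X_pow, mul_ite, mul_one, mul_zero]
  rw [Finset.sum_ite_eq (Finset.range n) j]
  simp [Finset.mem_range]

lemma redNarayanaCT_coeff (n j : ℕ) :
    (redNarayanaCT n).coeff j =
      if j < n then (3 * (n : ℝ) - 2 * (j : ℝ)) / ((n : ℝ) + 2) * narayanaNum n (j+1) else 0 := by
  simp only [redNarayanaCT, Polynomial.finset_sum_coeff, Polynomial.coeff_C_mul,
    Polynomial.coeff_X_pow, mul_ite, mul_one, mul_zero]
  rw [Finset.sum_ite_eq (Finset.range n) j]
  simp [Finset.mem_range]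

lemma narayanaNum_pos {n k : ℕ} (h1 : 1 ≤ k) (h2 : k ≤ n) : 0 < narayanaNum n k := by
  have h0 : 0 < n := lt_of_lt_of_le h1 h2
  have c1 : 0 < n.choose k := Nat.choose_pos h2
  have c2 : 0 < n.choose (k-1) := Nat.choose_pos (le_trans (Nat.sub_le _ _) h2)
  unfold narayanaNum
  positivity

lemma narayanaNum_top {n : ℕ} (hn : 1 ≤ n) : narayanaNum n n = 1 := by
  unfold narayanaNum
  rw [Nat.choose_self, Nat.choose_symm_of_eq_add (by omega : n = (n-1) + 1),
    Nat.choose_one_right]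
  have : (n:ℝ) ≠ 0 := by positivity
  field_simp
  norm_num
lemma redNarayana_natDegree {n : ℕ} (hn : 1 ≤ n) : (redNarayana n).natDegree = n - 1 := by
  have hne : (redNarayana n).coeff (n-1) ≠ 0 := by
    rw [redNarayana_coeff]
    simp only [if_pos (by omega : n - 1 < n)]
    rw [(by omega : n - 1 + 1 = n), narayanaNum_top hn]
    norm_num
  have hle : (redNarayana n).natDegree ≤ n - 1 := by
    apply Polynomial.natDegree_le_iff_coeff_eq_zero.2
    intro j hj
    rw [redNarayana_coeff, if_neg (by omega)]
  exact le_antisymm hle (Polynomial.le_natDegree_of_ne_zero hne)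

lemma redNarayana_monic {n : ℕ} (hn : 1 ≤ n) : (redNarayana n).Monic := by
  unfold Polynomial.Monic Polynomial.leadingCoeff
  rw [redNarayana_natDegree hn, redNarayana_coeff, if_pos (by omega : n - 1 < n),
    (by omega : n - 1 + 1 = n), narayanaNum_top hn]

lemma redNarayanaCT_natDegree {n : ℕ} (hn : 2 ≤ n) : (redNarayanaCT n).natDegree = n - 1 := by
  have hcast : ((n - 1 : ℕ) : ℝ) = (n : ℝ) - 1 := by
    rw [Nat.cast_sub (by omega)]; norm_num
  have hne : (redNarayanaCT n).coeff (n-1) ≠ 0 := by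
    rw [redNarayanaCT_coeff]
    simp only [if_pos (by omega : n - 1 < n)]
    rw [(by omega : n - 1 + 1 = n), narayanaNum_top (by omega), hcast]
    have h2 : (0:ℝ) < (n:ℝ) + 2 := by positivity
    have : (3 * (n : ℝ) - 2 * ((n:ℝ) - 1)) / ((n : ℝ) + 2) = 1 := by field_simp; ring
    rw [this]; norm_num
  have hle : (redNarayanaCT n).natDegree ≤ n - 1 := by
    apply Polynomial.natDegree_le_iff_coeff_eq_zero.2
    intro j hj
    rw [redNarayanaCT_coeff, if_neg (by omega)]
  exact le_antisymm hle (Polynomial.le_natDegree_of_ne_zero hne)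

lemma redNarayanaCT_monic {n : ℕ} (hn : 2 ≤ n) : (redNarayanaCT n).Monic := by
  unfold Polynomial.Monic Polynomial.leadingCoeff
  rw [redNarayanaCT_natDegree hn, redNarayanaCT_coeff, if_pos (by omega : n - 1 < n),
    (by omega : n - 1 + 1 = n), narayanaNum_top (by omega)]
  have hcast : ((n - 1 : ℕ) : ℝ) = (n : ℝ) - 1 := by
    rw [Nat.cast_sub (by omega)]; norm_num
  rw [hcast]
  have h2 : (0:ℝ) < (n:ℝ) + 2 := by positivity
  field_simp; ring

/-- the key identity -/
lemma CT_identity (n : ℕ) :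
    Polynomial.C ((n:ℝ) + 2) * redNarayanaCT n =
      Polynomial.C (3*(n:ℝ)) * redNarayana n
        - 2 * (Polynomial.X * Polynomial.derivative (redNarayana n)) := by
  have h2 : ((n:ℝ) + 2) ≠ 0 := by positivity
  ext j
  have hXd : (Polynomial.X * Polynomial.derivative (redNarayana n)).coeff j
      = (j : ℝ) * (redNarayana n).coeff j := by
    cases j with
    | zero => simp
    | succ i =>
      rw [Polynomial.coeff_X_mul, Polynomial.coeff_derivative, redNarayana_coeff]
      push_cast; ring
  rw [Polynomial.coeff_C_mul, redNarayanaCT_coeff, Polynomial.coeff_sub,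
    Polynomial.coeff_C_mul, Polynomial.coeff_ofNat_mul, hXd, redNarayana_coeff]
  by_cases h : j < n
  · rw [if_pos h, if_pos h]; field_simp
  · rw [if_neg h, if_neg h]; ring

lemma prod_linear_eval (m : ℕ) (x : ℕ → ℝ) (r : ℝ) :
    (∏ i ∈ Finset.range m, (Polynomial.X - Polynomial.C (x i))).eval r
      = ∏ i ∈ Finset.range m, (r - x i) := by
  simp [Polynomial.eval_prod]

lemma monic_eq_prod_of_roots {p : Polynomial ℝ} {m : ℕ} (x : ℕ → ℝ)
    (hmon : p.Monic) (hdeg : p.natDegree = m)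
    (hinj : ∀ i j, i < m → j < m → x i = x j → i = j)
    (hroots : ∀ i < m, p.eval (x i) = 0) :
    p = ∏ i ∈ Finset.range m, (Polynomial.X - Polynomial.C (x i)) := by
  set q : Polynomial ℝ := ∏ i ∈ Finset.range m, (Polynomial.X - Polynomial.C (x i)) with hq
  have hqmon : q.Monic := Polynomial.monic_prod_of_monic _ _ (fun i _ => Polynomial.monic_X_sub_C _)
  have hqdeg : q.natDegree = m := by
    rw [hq, Polynomial.natDegree_prod _ _ (fun i _ => Polynomial.X_sub_C_ne_zero _)]
    simp [Polynomial.natDegree_X_sub_C]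
  by_cases hpq : p = q
  · exact hpq
  have hdegeq : p.degree = q.degree := by
    rw [Polynomial.degree_eq_natDegree hmon.ne_zero,
      Polynomial.degree_eq_natDegree hqmon.ne_zero, hdeg, hqdeg]
  have hdlt : (p - q).degree < p.degree :=
    Polynomial.degree_sub_lt hdegeq hmon.ne_zero (by rw [hmon.leadingCoeff, hqmon.leadingCoeff])
  have hndlt : (p - q).natDegree < m := by
    rw [← hdeg]
    exact (Polynomial.natDegree_lt_natDegree_iff (sub_ne_zero.mpr hpq)).mpr hdlt
  have hzero : p - q = 0 := by
    apply Polynomial.eq_zero_of_natDegree_lt_card_of_eval_eq_zero (p - q)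
      (f := fun i : Fin m => x i)
    · intro i j hij
      exact Fin.ext (hinj i j i.2 j.2 hij)
    · intro i
      have hqz : q.eval (x i) = 0 := by
        rw [hq, prod_linear_eval]
        exact Finset.prod_eq_zero (Finset.mem_range.mpr i.2) (by ring)
      rw [Polynomial.eval_sub, hroots i i.2, hqz, sub_zero]
    · simpa using hndlt
  exact absurd (sub_eq_zero.mp hzero) hpq

lemma exists_root_between {f : Polynomial ℝ} {a b : ℝ} (hab : a < b)
    (h : f.eval a * f.eval b < 0) : ∃ c, a < c ∧ c < b ∧ f.eval c = 0 := by
  have hcont : ContinuousOn (fun t => f.eval t) (Set.Icc a b) :=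
    (Polynomial.continuous f).continuousOn
  rcases lt_or_ge (f.eval a) 0 with ha | ha
  · have hb : 0 < f.eval b := by nlinarith
    have := intermediate_value_Ioo hab.le hcont (a := a) (b := b)
    have h0 : (0:ℝ) ∈ Set.Ioo (f.eval a) (f.eval b) := ⟨ha, hb⟩
    obtain ⟨c, hc, hfc⟩ := this h0
    exact ⟨c, hc.1, hc.2, hfc⟩
  · have ha' : 0 < f.eval a := by
      rcases ha.lt_or_eq with h' | h'
      · exact h'
      · rw [← h'] at h; simp at h
    have hb : f.eval b < 0 := by nlinarith
    have := intermediate_value_Ioo' hab.le hcont (a := a) (b := b)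
    have h0 : (0:ℝ) ∈ Set.Ioo (f.eval b) (f.eval a) := ⟨hb, ha'⟩
    obtain ⟨c, hc, hfc⟩ := this h0
    exact ⟨c, hc.1, hc.2, hfc⟩

/-- product of negative numbers sign -/
lemma prod_neg_sign {s : Finset ℕ} {g : ℕ → ℝ} (h : ∀ i ∈ s, g i < 0) :
    0 < (-1 : ℝ) ^ s.card * ∏ i ∈ s, g i := by
  have : ∏ i ∈ s, g i = (-1 : ℝ) ^ s.card * ∏ i ∈ s, (-(g i)) := by
    rw [← Finset.prod_const (-1 : ℝ), ← Finset.prod_mul_distrib]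
    apply Finset.prod_congr rfl
    intro i _; ring
  rw [this, ← mul_assoc, ← pow_add, ← two_mul, pow_mul]
  norm_num
  exact Finset.prod_pos (fun i hi => neg_pos.mpr (h i hi))

lemma derivative_finset_prod (s : Finset ℕ) (f : ℕ → Polynomial ℝ) :
    Polynomial.derivative (∏ i ∈ s, f i)
      = ∑ i ∈ s, (∏ j ∈ s.erase i, f j) * Polynomial.derivative (f i) := by
  classical
  induction s using Finset.induction with
  | empty => simp
  | @insert a s ha ih =>
    rw [Finset.prod_insert ha, Polynomial.derivative_mul, ih, Finset.mul_sum,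
      Finset.sum_insert ha, Finset.erase_insert ha]
    congr 1
    · ring
    · apply Finset.sum_congr rfl
      intro i hi
      rw [Finset.erase_insert_of_ne (by rintro rfl; exact ha hi),
        Finset.prod_insert (fun hmem => ha (Finset.mem_of_mem_erase hmem))]
      ring

/-- eval of derivative of product of linear factors at a root -/
lemma deriv_prod_eval (m k : ℕ) (hk : k < m) (x : ℕ → ℝ)
    (hinj : ∀ i j, i < m → j < m → x i = x j → i = j) :
    (Polynomial.derivative (∏ i ∈ Finset.range m, (Polynomial.X - Polynomial.C (x i)))).eval (x k)
      = ∏ i ∈ (Finset.range m).erase k, (x k - x i) := by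
  classical
  rw [derivative_finset_prod]
  rw [Polynomial.eval_finset_sum]
  rw [Finset.sum_eq_single k]
  · simp [Polynomial.eval_prod]
  · intro i hi hik
    have hkmem : k ∈ (Finset.range m).erase i := by
      simp [Finset.mem_erase, Ne.symm hik, hk]
    rw [Polynomial.eval_mul, Polynomial.eval_prod,
      Finset.prod_eq_zero hkmem (by simp), zero_mul]
  · intro h; exact absurd (Finset.mem_range.mpr hk) h

lemma exists_neg_far {f : Polynomial ℝ} (hmon : f.Monic) (hdeg : 0 < f.natDegree) (a : ℝ) :
    ∃ T, T < a ∧ 0 < (-1:ℝ)^f.natDegree * f.eval T := by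
  set m := f.natDegree with hm
  set g : Polynomial ℝ := Polynomial.C ((-1:ℝ)^m) * (f.comp (-Polynomial.X)) with hg
  have hnegX : (-Polynomial.X : Polynomial ℝ).natDegree = 1 := by simp
  have hcompdeg : (f.comp (-Polynomial.X)).natDegree = m := by
    rw [Polynomial.natDegree_comp, hnegX, mul_one]
  have hgdeg : g.natDegree = m := by
    rw [hg, Polynomial.natDegree_C_mul (by positivity : ((-1:ℝ)^m) ≠ 0), hcompdeg]
  have hglc : g.leadingCoeff = 1 := by
    rw [hg, Polynomial.leadingCoeff_mul, Polynomial.leadingCoeff_C,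
      Polynomial.leadingCoeff_comp (by rw [hnegX]; norm_num), hmon.leadingCoeff]
    norm_num [← hm, ← pow_add, ← two_mul, pow_mul]
  have hgdegpos : 0 < g.degree := by
    rw [Polynomial.degree_eq_natDegree (fun h => by simp [h] at hglc), hgdeg]
    exact_mod_cast hdeg
  have htend : Tendsto (fun y => g.eval y) atTop atTop :=
    Polynomial.tendsto_atTop_of_leadingCoeff_nonneg g hgdegpos (by rw [hglc]; norm_num)
  have h1 : ∀ᶠ y in atTop, 1 ≤ g.eval y := htend.eventually_ge_atTop 1
  have h2 : ∀ᶠ y in atTop, -a < y := eventually_gt_atTop (-a)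
  obtain ⟨y, hy1, hy2⟩ := (h1.and h2).exists
  refine ⟨-y, by linarith, ?_⟩
  have : g.eval y = (-1:ℝ)^m * f.eval (-y) := by
    rw [hg]; simp [Polynomial.eval_comp]
  rw [← this]; linarith

/-- Corollary on Narayana polynomials — the Christoffel-type transform
`𝒩̃_n` has `n−1` real simple zeros which alternate with the zeros
`x 0 < … < x (n-2)` of `𝒩_n`: namely `𝒩̃_n ≺ 𝒩_n`. -/
theorem stmt_13 (n : ℕ) (hn : 2 ≤ n)
    (x : ℕ → ℝ)
    (hx : ∀ i j : ℕ, i < j → j < n - 1 → x i < x j)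
    (hxroots : ∀ r : ℝ, (redNarayana n).eval r = 0 ↔ ∃ i < n - 1, x i = r) :
    ∃ z : ℕ → ℝ, (∀ i j : ℕ, i < j → j < n - 1 → z i < z j) ∧
      (∀ r : ℝ, (redNarayanaCT n).eval r = 0 ↔ ∃ i < n - 1, z i = r) ∧
      (∀ i < n - 1, z i < x i) ∧ (∀ i : ℕ, i + 1 < n - 1 → x i < z (i + 1)) := by
  classical
  set m := n - 1 with hmdef
  have hm1 : 1 ≤ m := by omega
  set p := redNarayana n with hpdefn
  set f := redNarayanaCT n with hfdefn
  have hpmon : p.Monic := redNarayana_monic (by omega)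
  have hpdeg : p.natDegree = m := redNarayana_natDegree (by omega)
  have hfmon : f.Monic := redNarayanaCT_monic hn
  have hfdeg : f.natDegree = m := redNarayanaCT_natDegree hn
  have hn2pos : (0:ℝ) < (n:ℝ) + 2 := by positivity
  -- x is injective on range m
  have hxinj : ∀ i j, i < m → j < m → x i = x j → i = j := by
    intro i j hi hj hij
    rcases lt_trichotomy i j with h | h | h
    · exact absurd hij (ne_of_lt (hx i j h hj))
    · exact h
    · exact absurd hij.symm (ne_of_lt (hx j i h hi))
  have hxroot : ∀ i < m, p.eval (x i) = 0 := fun i hi => (hxroots (x i)).2 ⟨i, hi, rfl⟩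
  have hfact : p = ∏ i ∈ Finset.range m, (Polynomial.X - Polynomial.C (x i)) :=
    monic_eq_prod_of_roots x hpmon hpdeg hxinj hxroot
  -- p is positive on [0, ∞)
  have hppos : ∀ r : ℝ, 0 ≤ r → 0 < p.eval r := by
    intro r hr
    rw [hpdefn, redNarayana, Polynomial.eval_finset_sum]
    simp only [Polynomial.eval_mul, Polynomial.eval_C, Polynomial.eval_pow, Polynomial.eval_X]
    apply Finset.sum_pos'
    · intro j _
      have := narayanaNum_pos (n := n) (k := j+1) (by omega)
      by_cases hjn : j + 1 ≤ n
      · have := this hjn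
        positivity
      · have : narayanaNum n (j+1) = 0 := by
          unfold narayanaNum
          rw [Nat.choose_eq_zero_of_lt (by omega)]
          simp
        rw [this]; simp [mul_nonneg (le_refl (0:ℝ)), pow_nonneg hr]
    · refine ⟨0, Finset.mem_range.mpr (by omega), ?_⟩
      have := narayanaNum_pos (n := n) (k := 1) le_rfl (by omega)
      simpa using this
  have hxneg : ∀ i < m, x i < 0 := by
    intro i hi
    by_contra hcon
    push_neg at hcon
    exact absurd (hxroot i hi) (ne_of_gt (hppos (x i) hcon))
  -- derivative evaluation
  have hderiv : ∀ k < m, (Polynomial.derivative p).eval (x k)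
      = ∏ i ∈ (Finset.range m).erase k, (x k - x i) := by
    intro k hk
    rw [hfact]
    exact deriv_prod_eval m k hk x hxinj
  -- sign of derivative at roots
  have hsign : ∀ k < m, 0 < (-1:ℝ)^(m-1-k) * (Polynomial.derivative p).eval (x k) := by
    intro k hk
    rw [hderiv k hk]
    have hsplit : (Finset.range m).erase k = Finset.range k ∪ Finset.Ico (k+1) m := by
      ext i
      simp only [Finset.mem_erase, Finset.mem_range, Finset.mem_union, Finset.mem_Ico]
      omega
    have hdisj : Disjoint (Finset.range k) (Finset.Ico (k+1) m) := by
      rw [Finset.disjoint_left]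
      intro i hi hi'
      simp only [Finset.mem_range] at hi
      simp only [Finset.mem_Ico] at hi'
      omega
    rw [hsplit, Finset.prod_union hdisj]
    have h1 : 0 < ∏ i ∈ Finset.range k, (x k - x i) := by
      apply Finset.prod_pos
      intro i hi
      simp only [Finset.mem_range] at hi
      have := hx i k hi hk
      linarith
    have h2 : 0 < (-1:ℝ)^(m-1-k) * ∏ i ∈ Finset.Ico (k+1) m, (x k - x i) := by
      have hcard : (Finset.Ico (k+1) m).card = m - 1 - k := by
        rw [Nat.card_Ico]; omega
      rw [← hcard]
      apply prod_neg_sign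
      intro i hi
      simp only [Finset.mem_Ico] at hi
      have := hx k i hi.1 hi.2
      linarith
    calc (0:ℝ) < ((-1:ℝ)^(m-1-k) * ∏ i ∈ Finset.Ico (k+1) m, (x k - x i))
          * ∏ i ∈ Finset.range k, (x k - x i) := mul_pos h2 h1
      _ = (-1:ℝ)^(m-1-k) * ((∏ i ∈ Finset.range k, (x k - x i))
          * ∏ i ∈ Finset.Ico (k+1) m, (x k - x i)) := by ring
  -- eval identity
  have hiden : ∀ r : ℝ, ((n:ℝ)+2) * f.eval r
      = 3*(n:ℝ) * p.eval r - 2 * (r * (Polynomial.derivative p).eval r) := by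
    intro r
    have := congrArg (Polynomial.eval r) (CT_identity n)
    simpa using this
  -- sign of f at the roots of p
  have hfx : ∀ k < m, 0 < (-1:ℝ)^(m-1-k) * f.eval (x k) := by
    intro k hk
    have hA := hsign k hk
    have hB : 0 < -(x k) := by linarith [hxneg k hk]
    have heq := hiden (x k)
    rw [hxroot k hk] at heq
    have h3 : 0 < ((n:ℝ)+2) * ((-1:ℝ)^(m-1-k) * f.eval (x k)) := by
      have : ((n:ℝ)+2) * ((-1:ℝ)^(m-1-k) * f.eval (x k))
          = 2 * (-(x k)) * ((-1:ℝ)^(m-1-k) * (Polynomial.derivative p).eval (x k)) := by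
        linear_combination ((-1:ℝ)^(m-1-k)) * heq
      rw [this]
      positivity
    have := div_pos h3 hn2pos
    rwa [mul_div_cancel_left₀ _ (ne_of_gt hn2pos)] at this
  -- opposite signs in gaps
  have hgap : ∀ k, 1 ≤ k → k < m → f.eval (x (k-1)) * f.eval (x k) < 0 := by
    intro k hk1 hkm
    have h1 := hfx (k-1) (by omega)
    have h2 := hfx k hkm
    have hflip : (-1:ℝ)^(m-1-(k-1)) = -(-1:ℝ)^(m-1-k) := by
      rw [show m-1-(k-1) = (m-1-k)+1 by omega, pow_succ]
      ring
    rw [hflip] at h1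
    have hε2 : ((-1:ℝ)^(m-1-k)) * ((-1:ℝ)^(m-1-k)) = 1 := by
      rw [← pow_add, ← two_mul, pow_mul]
      norm_num
    nlinarith [mul_pos h1 h2]
  -- point to the left of x 0 with opposite sign
  obtain ⟨T, hT, hTval⟩ := exists_neg_far hfmon (by omega) (x 0)
  rw [hfdeg] at hTval
  have hleft : f.eval T * f.eval (x 0) < 0 := by
    have h2 := hfx 0 (by omega)
    have hflip : (-1:ℝ)^m = -(-1:ℝ)^(m-1-0) := by
      have h0 : m = (m-1-0)+1 := by omega
      conv_lhs => rw [h0]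
      rw [pow_succ]; ring
    rw [hflip] at hTval
    have hε2 : ((-1:ℝ)^(m-1-0)) * ((-1:ℝ)^(m-1-0)) = 1 := by
      rw [← pow_add, ← two_mul, pow_mul]
      norm_num
    nlinarith [mul_pos hTval h2]
  -- choose the roots of f
  have H : ∀ k, k < m → ∃ c, f.eval c = 0 ∧ c < x k ∧ (∀ j, k = j + 1 → x j < c) := by
    intro k hk
    cases k with
    | zero =>
      obtain ⟨c, hc1, hc2, hc3⟩ := exists_root_between hT hleft
      exact ⟨c, hc3, hc2, fun j hj => absurd hj (by omega)⟩
    | succ j =>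
      have hxj : x j < x (j+1) := hx j (j+1) (by omega) hk
      have := hgap (j+1) (by omega) hk
      simp only [Nat.add_sub_cancel] at this
      obtain ⟨c, hc1, hc2, hc3⟩ := exists_root_between hxj this
      refine ⟨c, hc3, hc2, ?_⟩
      intro j' hj'
      have : j' = j := by omega
      rw [this]; exact hc1
  set z : ℕ → ℝ := fun k => if h : k < m then (H k h).choose else 0 with hzdef
  have hzspec : ∀ k (hk : k < m), f.eval (z k) = 0 ∧ z k < x k ∧
      (∀ j, k = j + 1 → x j < z k) := by
    intro k hk
    have : z k = (H k hk).choose := by rw [hzdef]; simp [hk]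
    rw [this]
    exact (H k hk).choose_spec
  -- monotonicity of z
  have hzmono : ∀ i j : ℕ, i < j → j < m → z i < z j := by
    intro i j hij hjm
    have h1 : z i < x i := (hzspec i (by omega)).2.1
    have h2 : x (j-1) < z j := (hzspec j hjm).2.2 (j-1) (by omega)
    have h3 : x i ≤ x (j-1) := by
      rcases eq_or_lt_of_le (by omega : i ≤ j - 1) with h | h
      · rw [h]
      · exact le_of_lt (hx i (j-1) h (by omega))
    linarith
  have hzinj : ∀ i j, i < m → j < m → z i = z j → i = j := by
    intro i j hi hj hij
    rcases lt_trichotomy i j with h | h | h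
    · exact absurd hij (ne_of_lt (hzmono i j h hj))
    · exact h
    · exact absurd hij.symm (ne_of_lt (hzmono j i h hi))
  have hffact : f = ∏ i ∈ Finset.range m, (Polynomial.X - Polynomial.C (z i)) :=
    monic_eq_prod_of_roots z hfmon hfdeg hzinj (fun i hi => (hzspec i hi).1)
  refine ⟨z, hzmono, ?_, fun i hi => (hzspec i hi).2.1, fun i hi => (hzspec (i+1) hi).2.2 i rfl⟩
  intro r
  rw [hffact, prod_linear_eval, Finset.prod_eq_zero_iff]
  constructor
  · rintro ⟨i, hi, hzero⟩
    exact ⟨i, Finset.mem_range.mp hi, by linarith [sub_eq_zero.mp hzero]⟩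
  · rintro ⟨i, hi, rfl⟩
    exact ⟨i, Finset.mem_range.mpr hi, by ring⟩
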